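/- Let λ₁, λ₂, λ₃ ∈ ℂ∖{0}, and let N = (n₁,n₂,n₃) and M = (m₁,m₂,m₃) be vectors in ℕ³, each off the coordinate axes, which are linearly independent (over ℚ, viewing them in ℚ³) and which both satisfy the resonance relations λ₁n₁ + λ₂n₂ + λ₃n₃ = 0 and λ₁m₁ + λ₂m₂ + λ₃m₃ = 0. Then there exist integers a, b, c ∈ ℤ and λ ∈ ℂ∖{0} such that (λ₁,λ₂,λ₃) = λ·(a,b,c) and a·b·c < 0. -/

import Mathlib

set_option maxHeartbeats 1000000


/-- A vector `N ∈ ℕ³` is off the coordinate axes if at least two of its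
components are nonzero. -/
def OffAxes (N : Fin 3 → ℕ) : Prop :=
  (N 0 ≠ 0 ∧ N 1 ≠ 0) ∨ (N 0 ≠ 0 ∧ N 2 ≠ 0) ∨ (N 1 ≠ 0 ∧ N 2 ≠ 0)

/-- **Lemma (preparation).** If `λ₁, λ₂, λ₃` are nonzero complex numbers and
`N, M ∈ ℕ³ − C₃` are linearly independent over `ℚ` and both are resonances for
`(λ₁, λ₂, λ₃)`, then `(λ₁, λ₂, λ₃) = λ·(a, b, c)` for some nonzero `λ ∈ ℂ` and
integers `a, b, c` with `a·b·c < 0`. -/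
theorem preparation_lemma (l₁ l₂ l₃ : ℂ) (hl₁ : l₁ ≠ 0) (hl₂ : l₂ ≠ 0) (hl₃ : l₃ ≠ 0)
    (N M : Fin 3 → ℕ) (hN : OffAxes N) (hM : OffAxes M)
    (hindep : LinearIndependent ℚ ![(fun i => (N i : ℚ)), (fun i => (M i : ℚ))])
    (hresN : l₁ * N 0 + l₂ * N 1 + l₃ * N 2 = 0)
    (hresM : l₁ * M 0 + l₂ * M 1 + l₃ * M 2 = 0) :
    ∃ (a b c : ℤ) (lam : ℂ), lam ≠ 0 ∧
      l₁ = lam * a ∧ l₂ = lam * b ∧ l₃ = lam * c ∧ a * b * c < 0 := by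
  obtain ⟨A, hA_def⟩ : ∃ A : ℤ, A = (N 1 : ℤ) * M 2 - N 2 * M 1 := ⟨_, rfl⟩
  obtain ⟨B, hB_def⟩ : ∃ B : ℤ, B = (N 2 : ℤ) * M 0 - N 0 * M 2 := ⟨_, rfl⟩
  obtain ⟨C, hC_def⟩ : ∃ C : ℤ, C = (N 0 : ℤ) * M 1 - N 1 * M 0 := ⟨_, rfl⟩
  -- key relations
  have eB : l₂ * (A : ℂ) = l₁ * (B : ℂ) := by
    push_cast [hA_def, hB_def]
    linear_combination (M 2 : ℂ) * hresN - (N 2 : ℂ) * hresM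
  have eC : l₃ * (A : ℂ) = l₁ * (C : ℂ) := by
    push_cast [hA_def, hC_def]
    linear_combination (N 1 : ℂ) * hresM - (M 1 : ℂ) * hresN
  -- A ≠ 0
  have hA : A ≠ 0 := by
    intro h
    have hB0 : B = 0 := by
      have : l₁ * (B : ℂ) = 0 := by rw [← eB, h]; simp
      have := (mul_eq_zero.1 this).resolve_left hl₁
      exact_mod_cast this
    have hC0 : C = 0 := by
      have : l₁ * (C : ℂ) = 0 := by rw [← eC, h]; simp
      have := (mul_eq_zero.1 this).resolve_left hl₁
      exact_mod_cast this
    have hAq : (N 1 : ℚ) * M 2 = (N 2 : ℚ) * M 1 := by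
      have : (N 1 : ℤ) * M 2 = (N 2 : ℤ) * M 1 := by rw [hA_def] at h; linarith
      exact_mod_cast this
    have hBq : (N 2 : ℚ) * M 0 = (N 0 : ℚ) * M 2 := by
      have : (N 2 : ℤ) * M 0 = (N 0 : ℤ) * M 2 := by rw [hB_def] at hB0; linarith
      exact_mod_cast this
    have hCq : (N 0 : ℚ) * M 1 = (N 1 : ℚ) * M 0 := by
      have : (N 0 : ℤ) * M 1 = (N 1 : ℤ) * M 0 := by rw [hC_def] at hC0; linarith
      exact_mod_cast this
    obtain ⟨i, hi⟩ : ∃ i, N i ≠ 0 := by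
      rcases hN with ⟨h1, _⟩ | ⟨h1, _⟩ | ⟨h1, _⟩
      exacts [⟨0, h1⟩, ⟨0, h1⟩, ⟨1, h1⟩]
    have key := (LinearIndependent.pair_iff.1 hindep) ((M i : ℚ)) (-(N i : ℚ)) ?_
    · have : (N i : ℚ) ≠ 0 := by exact_mod_cast hi
      exact this (by linarith [key.2])
    · funext j
      fin_cases i <;> fin_cases j <;>
        simp only [Pi.add_apply, Pi.smul_apply, smul_eq_mul, Pi.zero_apply,
          Matrix.cons_val_zero, Matrix.cons_val_one, Matrix.head_cons, Fin.reduceFinMk] <;>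
        (ring_nf; all_goals (ring_nf at hAq hBq hCq; linarith [hAq, hBq, hCq]))
  have hAc : (A : ℂ) ≠ 0 := Int.cast_ne_zero.2 hA
  set lam : ℂ := l₁ / A with hlam_def
  have hlam : lam ≠ 0 := div_ne_zero hl₁ hAc
  have h1 : l₁ = lam * A := by rw [hlam_def]; field_simp
  have h2 : l₂ = lam * B := by
    rw [hlam_def]; field_simp; linear_combination eB
  have h3 : l₃ = lam * C := by
    rw [hlam_def]; field_simp; linear_combination eC
  have hB : B ≠ 0 := by
    rintro rfl; simp at h2; exact hl₂ h2
  have hC : C ≠ 0 := by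
    rintro rfl; simp at h3; exact hl₃ h3
  have habc : A * B * C ≠ 0 := by positivity
  rcases lt_or_gt_of_ne habc with hlt | hgt
  · exact ⟨A, B, C, lam, hlam, h1, h2, h3, hlt⟩
  · refine ⟨-A, -B, -C, -lam, neg_ne_zero.2 hlam, ?_, ?_, ?_, by nlinarith⟩
    · push_cast; rw [h1]; ring
    · push_cast; rw [h2]; ring
    · push_cast; rw [h3]; ring
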